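/- Let g : ℝ² → ℝ be a smooth compactly supported function and c := exp∘g. Then ∫_{ℝ²} c⁻³ |∇c|⁴ dx + ∫_{ℝ²} c⁻¹ |D²c|² dx ≤ 77 ∫_{ℝ²} c |D²(ln c)|² dx. -/

import Mathlib

open MeasureTheory Real

noncomputable section

/-- The plane `ℝ²` as a Euclidean space. -/
abbrev E2 : Type := EuclideanSpace ℝ (Fin 2)

/-- `i`-th partial derivative of a scalar function on `ℝ²`. -/
def pd (i : Fin 2) (f : E2 → ℝ) (x : E2) : ℝ :=
  fderiv ℝ f x (EuclideanSpace.single i 1)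

/-- Laplacian `Δf = ∑ i, ∂_i ∂_i f`. -/
def lap (f : E2 → ℝ) (x : E2) : ℝ := ∑ i, pd i (pd i f) x

/-- `|∇f|² = ∑ i, (∂_i f)²`. -/
def gradSq (f : E2 → ℝ) (x : E2) : ℝ := ∑ i, (pd i f x) ^ 2

/-- Squared Frobenius norm of the Hessian: `|D²f|² = ∑ i j, (∂²_{ij} f)²`. -/
def hessSq (f : E2 → ℝ) (x : E2) : ℝ := ∑ i, ∑ j, (pd i (pd j f) x) ^ 2

/-- `⟨D²f ∇f, ∇f⟩ = ∑ i j, (∂²_{ij} f)(∂_i f)(∂_j f)`. -/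
def hessGrad (f : E2 → ℝ) (x : E2) : ℝ :=
  ∑ i, ∑ j, pd i (pd j f) x * pd i f x * pd j f x

/-- auxiliary: `∑ i j, (∂_i f ∂_j f + ∂²_{ij} f)²`. -/
def Sfn (f : E2 → ℝ) (x : E2) : ℝ :=
  ∑ i, ∑ j, (pd i f x * pd j f x + pd i (pd j f) x) ^ 2

end

section helpers
set_option linter.unusedSectionVars false
variable {f h : E2 → ℝ} {i j : Fin 2} {x : E2}

lemma diffable (hf : ContDiff ℝ (⊤ : ℕ∞) f) : Differentiable ℝ f :=
  hf.differentiable (by simp)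

lemma contDiff_pd (hf : ContDiff ℝ (⊤ : ℕ∞) f) (i : Fin 2) : ContDiff ℝ (⊤ : ℕ∞) (pd i f) :=
  (hf.fderiv_right (le_refl _)).clm_apply contDiff_const

lemma hcs_pd (hf : HasCompactSupport f) (i : Fin 2) : HasCompactSupport (pd i f) :=
  (hf.fderiv ℝ).comp_left (g := fun L : E2 →L[ℝ] ℝ => L (EuclideanSpace.single i 1)) rfl

lemma pd_mul (hf : Differentiable ℝ f) (hh : Differentiable ℝ h) :
    pd i (fun y => f y * h y) x = pd i f x * h x + f x * pd i h x := by
  unfold pd; rw [fderiv_fun_mul (hf x) (hh x)]; simp; ring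

lemma pd_exp (hf : Differentiable ℝ f) :
    pd i (fun y => Real.exp (f y)) x = Real.exp (f x) * pd i f x := by
  unfold pd; rw [fderiv_exp (hf x)]; simp

lemma pd_sum {F : Fin 2 → E2 → ℝ} (hF : ∀ j, Differentiable ℝ (F j)) :
    pd i (fun y => ∑ j, F j y) x = ∑ j, pd i (F j) x := by
  unfold pd; rw [fderiv_fun_sum (fun j _ => hF j x)]; simp

lemma integ {f : E2 → ℝ} (hf : Continuous f) (h : HasCompactSupport f) :
    Integrable f := hf.integrable_of_hasCompactSupport h

lemma cs_sq {f : E2 → ℝ} (hf : HasCompactSupport f) :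
    HasCompactSupport (fun y => (f y)^2) :=
  hf.comp_left (g := fun t : ℝ => t^2) (by norm_num)

variable {g : E2 → ℝ} (hg : ContDiff ℝ (⊤ : ℕ∞) g) (hgc : HasCompactSupport g)
include hg

lemma pd_c (i : Fin 2) (x : E2) :
    pd i (fun y => Real.exp (g y)) x = Real.exp (g x) * pd i g x :=
  pd_exp (diffable hg)

lemma pd_pd_c (i j : Fin 2) (x : E2) :
    pd i (pd j (fun y => Real.exp (g y))) x
      = Real.exp (g x) * (pd i g x * pd j g x + pd i (pd j g) x) := by
  have h1 : pd j (fun y => Real.exp (g y)) = fun y => Real.exp (g y) * pd j g y :=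
    funext fun y => pd_c hg j y
  rw [h1, pd_mul (Differentiable.exp (diffable hg))
    (diffable (contDiff_pd hg j)), pd_exp (diffable hg)]
  ring

omit hg in
lemma gradSq_as_mul : gradSq g = fun y => ∑ j, pd j g y * pd j g y := by
  funext y; unfold gradSq; exact Finset.sum_congr rfl fun j _ => sq (pd j g y)

lemma contDiff_gradSq : ContDiff ℝ (⊤ : ℕ∞) (gradSq g) := by
  rw [gradSq_as_mul]
  exact ContDiff.sum fun j _ => (contDiff_pd hg j).mul (contDiff_pd hg j)

lemma contDiff_hessSq : ContDiff ℝ (⊤ : ℕ∞) (hessSq g) := by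
  unfold hessSq
  exact ContDiff.sum fun i _ => ContDiff.sum fun j _ => (contDiff_pd (contDiff_pd hg j) i).pow 2

lemma contDiff_Sfn : ContDiff ℝ (⊤ : ℕ∞) (Sfn g) := by
  unfold Sfn
  exact ContDiff.sum fun i _ => ContDiff.sum fun j _ =>
    (((contDiff_pd hg i).mul (contDiff_pd hg j)).add (contDiff_pd (contDiff_pd hg j) i)).pow 2

lemma pd_gradSq (i : Fin 2) (x : E2) :
    pd i (gradSq g) x = ∑ j, 2 * pd j g x * pd i (pd j g) x := by
  rw [gradSq_as_mul,
    pd_sum fun j => diffable ((contDiff_pd hg j).mul (contDiff_pd hg j))]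
  refine Finset.sum_congr rfl fun j _ => ?_
  rw [pd_mul (diffable (contDiff_pd hg j)) (diffable (contDiff_pd hg j))]
  ring

omit hg in
include hgc in
lemma cs_gradSq : HasCompactSupport (gradSq g) := by
  have : gradSq g = fun y => (pd 0 g y)^2 + (pd 1 g y)^2 := by
    funext y; unfold gradSq; rw [Fin.sum_univ_two]
  rw [this]
  exact HasCompactSupport.add (cs_sq (hcs_pd hgc 0)) (cs_sq (hcs_pd hgc 1))

omit hg in
include hgc in
lemma cs_hessSq : HasCompactSupport (hessSq g) := by
  have : hessSq g = fun y => (((pd 0 (pd 0 g) y)^2 + (pd 0 (pd 1 g) y)^2)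
      + ((pd 1 (pd 0 g) y)^2 + (pd 1 (pd 1 g) y)^2)) := by
    funext y; unfold hessSq; simp [Fin.sum_univ_two]
  rw [this]
  exact ((cs_sq (hcs_pd (hcs_pd hgc 0) 0)).add (cs_sq (hcs_pd (hcs_pd hgc 1) 0))).add
    ((cs_sq (hcs_pd (hcs_pd hgc 0) 1)).add (cs_sq (hcs_pd (hcs_pd hgc 1) 1)))

omit hg in
include hgc in
lemma cs_Sfn : HasCompactSupport (Sfn g) := by
  have : Sfn g = fun y =>
      (((pd 0 g y * pd 0 g y + pd 0 (pd 0 g) y)^2 + (pd 0 g y * pd 1 g y + pd 0 (pd 1 g) y)^2)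
      + ((pd 1 g y * pd 0 g y + pd 1 (pd 0 g) y)^2 + (pd 1 g y * pd 1 g y + pd 1 (pd 1 g) y)^2)) := by
    funext y; unfold Sfn; simp [Fin.sum_univ_two]
  rw [this]
  refine HasCompactSupport.add (HasCompactSupport.add ?_ ?_) (HasCompactSupport.add ?_ ?_) <;>
    exact cs_sq (HasCompactSupport.add ((hcs_pd hgc _).mul_right) (hcs_pd (hcs_pd hgc _) _))

include hgc in
lemma key (i : Fin 2) :
    ∫ x : E2, (pd i g x * gradSq g x) * pd i (fun y => Real.exp (g y)) x
      = - ∫ x : E2, pd i (fun y => pd i g y * gradSq g y) x * Real.exp (g x) := by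
  have hF : ContDiff ℝ (⊤ : ℕ∞) (fun x => pd i g x * gradSq g x) :=
    (contDiff_pd hg i).mul (contDiff_gradSq hg)
  have hFcs : HasCompactSupport (fun x => pd i g x * gradSq g x) :=
    (hcs_pd hgc i).mul_right
  have hce : ContDiff ℝ (⊤ : ℕ∞) (fun y => Real.exp (g y)) := Real.contDiff_exp.comp hg
  unfold pd
  apply integral_mul_fderiv_eq_neg_fderiv_mul_of_integrable
  · exact integ ((contDiff_pd hF i).continuous.mul hce.continuous) ((hcs_pd hFcs i).mul_right)
  · exact integ (hF.continuous.mul (contDiff_pd hce i).continuous) (hFcs.mul_right)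
  · exact integ (hF.continuous.mul hce.continuous) (hFcs.mul_right)
  · exact fun x _ => diffable hF x
  · exact fun x _ => diffable hce x

end helpers

lemma ptA (a00 a01 a10 a11 p0 p1 : ℝ) :
    -((a00*(p0^2+p1^2) + p0*(2*p0*a00 + 2*p1*a01)) + (a11*(p0^2+p1^2) + p1*(2*p0*a10 + 2*p1*a11)))
      ≤ 5*((a00^2+a01^2)+(a10^2+a11^2)) + (3/4)*(p0^2+p1^2)^2 := by
  nlinarith [sq_nonneg (a00+a11+(p0^2+p1^2)), sq_nonneg (a00-a11), sq_nonneg (4*a00+p0*p0),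
    sq_nonneg (4*a01+p0*p1), sq_nonneg (4*a10+p1*p0), sq_nonneg (4*a11+p1*p1)]

lemma ptB (a00 a01 a10 a11 p0 p1 : ℝ) :
    ((p0*p0+a00)^2 + (p0*p1+a01)^2) + ((p1*p0+a10)^2 + (p1*p1+a11)^2)
      ≤ 2*(p0^2+p1^2)^2 + 2*((a00^2+a01^2)+(a10^2+a11^2)) := by
  nlinarith [sq_nonneg (p0*p0-a00), sq_nonneg (p0*p1-a01), sq_nonneg (p1*p0-a10),
    sq_nonneg (p1*p1-a11)]

/-- Quantitative form of (3.10): for `c = exp ∘ g` with `g` smooth and compactly supported,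
`∫ c⁻³ |∇c|⁴ + ∫ c⁻¹ |D²c|² ≤ 77 ∫ c |D²(ln c)|²`. -/
theorem stmt11 (g : E2 → ℝ) (hg : ContDiff ℝ (⊤ : ℕ∞) g) (hgc : HasCompactSupport g)
    (c : E2 → ℝ) (hc : c = fun x => Real.exp (g x)) :
    (∫ x : E2, (gradSq c x) ^ 2 / (c x) ^ 3) + (∫ x : E2, hessSq c x / c x)
      ≤ 77 * ∫ x : E2, c x * hessSq (fun y => Real.log (c y)) x := by
  subst hc
  have hce : ContDiff ℝ (⊤ : ℕ∞) (fun y => Real.exp (g y)) := Real.contDiff_exp.comp hg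
  have contG : Continuous (gradSq g) := (contDiff_gradSq hg).continuous
  have contH : Continuous (hessSq g) := (contDiff_hessSq hg).continuous
  have contS : Continuous (Sfn g) := (contDiff_Sfn hg).continuous
  have csG : HasCompactSupport (gradSq g) := cs_gradSq hgc
  have csH : HasCompactSupport (hessSq g) := cs_hessSq hgc
  have csS : HasCompactSupport (Sfn g) := cs_Sfn hgc
  have II : ∀ (h : E2 → ℝ), Continuous h → HasCompactSupport h →
      Integrable (fun x : E2 => Real.exp (g x) * h x) := fun h ch csh =>
    integ ((Real.continuous_exp.comp hg.continuous).mul ch) csh.mul_left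
  set A := ∫ x : E2, Real.exp (g x) * (gradSq g x)^2 with hA
  set B := ∫ x : E2, Real.exp (g x) * hessSq g x with hB
  have intA : Integrable (fun x : E2 => Real.exp (g x) * (gradSq g x)^2) :=
    II _ (contG.pow 2) (cs_sq csG)
  have intB : Integrable (fun x : E2 => Real.exp (g x) * hessSq g x) := II _ contH csH
  have intS : Integrable (fun x : E2 => Real.exp (g x) * Sfn g x) := II _ contS csS
  -- the functions F i and their properties
  have hFsm : ∀ i : Fin 2, ContDiff ℝ (⊤ : ℕ∞) (fun x => pd i g x * gradSq g x) :=
    fun i => (contDiff_pd hg i).mul (contDiff_gradSq hg)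
  have hFcs : ∀ i : Fin 2, HasCompactSupport (fun x => pd i g x * gradSq g x) :=
    fun i => (hcs_pd hgc i).mul_right
  have intFc : ∀ i : Fin 2,
      Integrable (fun x : E2 => (pd i g x * gradSq g x) * pd i (fun y => Real.exp (g y)) x) :=
    fun i => integ ((hFsm i).continuous.mul (contDiff_pd hce i).continuous) ((hFcs i).mul_right)
  have intpdF : ∀ i : Fin 2,
      Integrable (fun x : E2 => pd i (fun y => pd i g y * gradSq g y) x * Real.exp (g x)) :=
    fun i => integ ((contDiff_pd (hFsm i) i).continuous.mul
      (Real.continuous_exp.comp hg.continuous)) ((hcs_pd (hFcs i) i).mul_right)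
  -- Step 1: A via integration by parts
  have step1 : A = ∫ x : E2,
      (-(pd 0 (fun y => pd 0 g y * gradSq g y) x + pd 1 (fun y => pd 1 g y * gradSq g y) x))
        * Real.exp (g x) := by
    have e1 : ∀ x : E2, Real.exp (g x) * (gradSq g x)^2
        = (pd 0 g x * gradSq g x) * pd 0 (fun y => Real.exp (g y)) x
          + (pd 1 g x * gradSq g x) * pd 1 (fun y => Real.exp (g y)) x := by
      intro x
      rw [pd_c hg, pd_c hg]
      have : gradSq g x = (pd 0 g x)^2 + (pd 1 g x)^2 := by
        unfold gradSq; rw [Fin.sum_univ_two]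
      rw [this]; ring
    rw [hA]
    simp only [e1]
    rw [integral_add (intFc 0) (intFc 1), key hg hgc 0, key hg hgc 1]
    have e2 : (fun x : E2 =>
        (-(pd 0 (fun y => pd 0 g y * gradSq g y) x + pd 1 (fun y => pd 1 g y * gradSq g y) x))
          * Real.exp (g x))
        = fun x : E2 => -(pd 0 (fun y => pd 0 g y * gradSq g y) x * Real.exp (g x))
          + -(pd 1 (fun y => pd 1 g y * gradSq g y) x * Real.exp (g x)) := funext fun x => by ring
    rw [e2, ← integral_neg, ← integral_neg]
    exact (integral_add (intpdF 0).neg (intpdF 1).neg).symm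
  -- Step 2: pointwise estimate and A ≤ 5B + (3/4)A
  have intcomb : Integrable (fun x : E2 =>
      Real.exp (g x) * (5 * hessSq g x + 3/4 * (gradSq g x)^2)) :=
    II _ ((continuous_const.mul contH).add (continuous_const.mul (contG.pow 2)))
      ((csH.mul_left).add ((cs_sq csG).mul_left))
  have intneg : Integrable (fun x : E2 =>
      (-(pd 0 (fun y => pd 0 g y * gradSq g y) x + pd 1 (fun y => pd 1 g y * gradSq g y) x))
        * Real.exp (g x)) := by
    have := ((intpdF 0).add (intpdF 1)).neg
    exact this.congr (Filter.Eventually.of_forall fun x => by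
      simp only [Pi.neg_apply, Pi.add_apply]; ring)
  have step2 : A ≤ 5 * B + 3/4 * A := by
    have hmono : (∫ x : E2,
        (-(pd 0 (fun y => pd 0 g y * gradSq g y) x + pd 1 (fun y => pd 1 g y * gradSq g y) x))
          * Real.exp (g x))
        ≤ ∫ x : E2, Real.exp (g x) * (5 * hessSq g x + 3/4 * (gradSq g x)^2) := by
      refine integral_mono intneg intcomb fun x => ?_
      have e0 : pd 0 (fun y => pd 0 g y * gradSq g y) x
          = pd 0 (pd 0 g) x * gradSq g x
            + pd 0 g x * (2 * pd 0 g x * pd 0 (pd 0 g) x + 2 * pd 1 g x * pd 0 (pd 1 g) x) := by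
        rw [pd_mul (diffable (contDiff_pd hg 0)) (diffable (contDiff_gradSq hg)),
          pd_gradSq hg, Fin.sum_univ_two]
      have e1 : pd 1 (fun y => pd 1 g y * gradSq g y) x
          = pd 1 (pd 1 g) x * gradSq g x
            + pd 1 g x * (2 * pd 0 g x * pd 1 (pd 0 g) x + 2 * pd 1 g x * pd 1 (pd 1 g) x) := by
        rw [pd_mul (diffable (contDiff_pd hg 1)) (diffable (contDiff_gradSq hg)),
          pd_gradSq hg, Fin.sum_univ_two]
      have hGx : gradSq g x = (pd 0 g x)^2 + (pd 1 g x)^2 := by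
        unfold gradSq; rw [Fin.sum_univ_two]
      have hHx : hessSq g x = ((pd 0 (pd 0 g) x)^2 + (pd 0 (pd 1 g) x)^2)
          + ((pd 1 (pd 0 g) x)^2 + (pd 1 (pd 1 g) x)^2) := by
        unfold hessSq; simp [Fin.sum_univ_two]
      have hpt : -(pd 0 (fun y => pd 0 g y * gradSq g y) x
            + pd 1 (fun y => pd 1 g y * gradSq g y) x)
          ≤ 5 * hessSq g x + 3/4 * (gradSq g x)^2 := by
        rw [e0, e1, hGx, hHx]
        linarith [ptA (pd 0 (pd 0 g) x) (pd 0 (pd 1 g) x) (pd 1 (pd 0 g) x) (pd 1 (pd 1 g) x)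
          (pd 0 g x) (pd 1 g x)]
      calc (-(pd 0 (fun y => pd 0 g y * gradSq g y) x
            + pd 1 (fun y => pd 1 g y * gradSq g y) x)) * Real.exp (g x)
          = Real.exp (g x) * (-(pd 0 (fun y => pd 0 g y * gradSq g y) x
            + pd 1 (fun y => pd 1 g y * gradSq g y) x)) := by ring
        _ ≤ Real.exp (g x) * (5 * hessSq g x + 3/4 * (gradSq g x)^2) :=
            mul_le_mul_of_nonneg_left hpt (Real.exp_pos _).le
    have hsplit : (∫ x : E2, Real.exp (g x) * (5 * hessSq g x + 3/4 * (gradSq g x)^2))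
        = 5 * B + 3/4 * A := by
      have : (fun x : E2 => Real.exp (g x) * (5 * hessSq g x + 3/4 * (gradSq g x)^2))
          = fun x : E2 => 5 * (Real.exp (g x) * hessSq g x)
            + 3/4 * (Real.exp (g x) * (gradSq g x)^2) := funext fun x => by ring
      rw [this, integral_add (intB.const_mul 5) (intA.const_mul (3/4)),
        integral_const_mul, integral_const_mul, hA, hB]
    rw [hsplit] at hmono
    exact step1.trans_le hmono
  have hA20 : A ≤ 20 * B := by linarith
  -- Step 3: second term
  have int2comb : Integrable (fun x : E2 =>
      Real.exp (g x) * (2 * (gradSq g x)^2 + 2 * hessSq g x)) :=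
    II _ ((continuous_const.mul (contG.pow 2)).add (continuous_const.mul contH))
      (((cs_sq csG).mul_left).add (csH.mul_left))
  have hSle : (∫ x : E2, Real.exp (g x) * Sfn g x) ≤ 2 * A + 2 * B := by
    have hmono : (∫ x : E2, Real.exp (g x) * Sfn g x)
        ≤ ∫ x : E2, Real.exp (g x) * (2 * (gradSq g x)^2 + 2 * hessSq g x) := by
      refine integral_mono intS int2comb fun x => ?_
      have hpt : Sfn g x ≤ 2 * (gradSq g x)^2 + 2 * hessSq g x := by
        have hGx : gradSq g x = (pd 0 g x)^2 + (pd 1 g x)^2 := by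
          unfold gradSq; rw [Fin.sum_univ_two]
        have hHx : hessSq g x = ((pd 0 (pd 0 g) x)^2 + (pd 0 (pd 1 g) x)^2)
            + ((pd 1 (pd 0 g) x)^2 + (pd 1 (pd 1 g) x)^2) := by
          unfold hessSq; simp [Fin.sum_univ_two]
        have hSx : Sfn g x =
            ((pd 0 g x * pd 0 g x + pd 0 (pd 0 g) x)^2 + (pd 0 g x * pd 1 g x + pd 0 (pd 1 g) x)^2)
            + ((pd 1 g x * pd 0 g x + pd 1 (pd 0 g) x)^2
              + (pd 1 g x * pd 1 g x + pd 1 (pd 1 g) x)^2) := by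
          unfold Sfn; simp [Fin.sum_univ_two]
        rw [hGx, hHx, hSx]
        linarith [ptB (pd 0 (pd 0 g) x) (pd 0 (pd 1 g) x) (pd 1 (pd 0 g) x) (pd 1 (pd 1 g) x)
          (pd 0 g x) (pd 1 g x)]
      exact mul_le_mul_of_nonneg_left hpt (Real.exp_pos _).le
    have hsplit : (∫ x : E2, Real.exp (g x) * (2 * (gradSq g x)^2 + 2 * hessSq g x))
        = 2 * A + 2 * B := by
      have : (fun x : E2 => Real.exp (g x) * (2 * (gradSq g x)^2 + 2 * hessSq g x))
          = fun x : E2 => 2 * (Real.exp (g x) * (gradSq g x)^2)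
            + 2 * (Real.exp (g x) * hessSq g x) := funext fun x => by ring
      rw [this, integral_add (intA.const_mul 2) (intB.const_mul 2),
        integral_const_mul, integral_const_mul, hA, hB]
    linarith
  have hBpos : 0 ≤ B := by
    rw [hB]
    refine integral_nonneg fun x => mul_nonneg (Real.exp_pos _).le ?_
    unfold hessSq
    exact Finset.sum_nonneg fun i _ => Finset.sum_nonneg fun j _ => sq_nonneg _
  -- rewrite the goal integrands
  simp only [Real.log_exp]
  have h1 : ∀ x : E2, gradSq (fun y => Real.exp (g y)) x ^ 2 / Real.exp (g x) ^ 3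
      = Real.exp (g x) * (gradSq g x)^2 := by
    intro x
    have hGc : gradSq (fun y => Real.exp (g y)) x = (Real.exp (g x))^2 * gradSq g x := by
      unfold gradSq
      rw [Fin.sum_univ_two, Fin.sum_univ_two, pd_c hg, pd_c hg]
      ring
    rw [hGc]
    have := (Real.exp_pos (g x)).ne'
    field_simp
  have h2 : ∀ x : E2, hessSq (fun y => Real.exp (g y)) x / Real.exp (g x)
      = Real.exp (g x) * Sfn g x := by
    intro x
    have hHc : hessSq (fun y => Real.exp (g y)) x = (Real.exp (g x))^2 * Sfn g x := by
      unfold hessSq Sfn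
      simp only [Fin.sum_univ_two, pd_pd_c hg]
      ring
    rw [hHc]
    have := (Real.exp_pos (g x)).ne'
    field_simp
  simp only [h1, h2]
  rw [← hA]
  linarith
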